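/- arXiv:2105.14169 — 2 statements merged into one kernel-verified Lean document; each statement's English description precedes it below -/
import Mathlib

section
/- For any m-element subset J of [m+n], the set of permutations γ ∈ S_{m+n} with γ^{-1}([1,m]) = J equals the left weak Bruhat interval [perm_J, perm^J]_L. -/
open scoped Classical

noncomputable section

/-- The symmetric group `S_{n+1}` (the paper's `S_n` with `n = n+1`). -/
abbrev SG (n : ℕ) := Equiv.Perm (Fin (n + 1))

/-- The simple transposition `s_{i+1}` (adjacent transposition swapping `i` and `i+1`,
0-indexed). -/
def sgen {n : ℕ} (i : Fin n) : SG n := Equiv.swap i.castSucc i.succ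

/-- Coxeter length of a permutation, i.e. its number of inversions. -/
def len {n : ℕ} (σ : SG n) : ℕ :=
  (Finset.univ.filter fun p : Fin (n + 1) × Fin (n + 1) => p.1 < p.2 ∧ σ p.2 < σ p.1).card

/-- The left weak Bruhat order on `S_{n+1}`. -/
def leL {n : ℕ} (σ ρ : SG n) : Prop := ∃ γ, ρ = γ * σ ∧ len ρ = len σ + len γ

/-- Left descent set. -/
def DesL {n : ℕ} (σ : SG n) : Set (Fin n) := {i | len (sgen i * σ) < len σ}

/-- Right descent set. -/
def DesR {n : ℕ} (σ : SG n) : Set (Fin n) := {i | len (σ * sgen i) < len σ}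

/-- The longest element `w₀` of `S_{n+1}`. -/
def w0 {n : ℕ} : SG n := ⟨Fin.rev, Fin.rev, Fin.rev_rev, Fin.rev_rev⟩

lemma len_one {n : ℕ} : len (1 : SG n) = 0 := by
  unfold len
  rw [Finset.card_eq_zero, Finset.eq_empty_iff_forall_notMem]
  rintro p hp
  rw [Finset.mem_filter] at hp
  obtain ⟨-, h1, h2⟩ := hp
  simp only [Equiv.Perm.one_apply] at h2
  exact absurd (h1.trans h2) (lt_irrefl _)

lemma leL_refl {n : ℕ} (σ : SG n) : leL σ σ :=
  ⟨1, (one_mul σ).symm, by simp [len_one]⟩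

/-- The defining relations of the 0-Hecke algebra `H_{n+1}(0)`. -/
inductive HRel (n : ℕ) : FreeAlgebra ℂ (Fin n) → FreeAlgebra ℂ (Fin n) → Prop
  | idem (i : Fin n) :
      HRel n (FreeAlgebra.ι ℂ i * FreeAlgebra.ι ℂ i) (FreeAlgebra.ι ℂ i)
  | braid (i j : Fin n) (h : (i : ℕ) + 1 = j) :
      HRel n (FreeAlgebra.ι ℂ i * FreeAlgebra.ι ℂ j * FreeAlgebra.ι ℂ i)
             (FreeAlgebra.ι ℂ j * FreeAlgebra.ι ℂ i * FreeAlgebra.ι ℂ j)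
  | comm (i j : Fin n) (h : (i : ℕ) + 2 ≤ j) :
      HRel n (FreeAlgebra.ι ℂ i * FreeAlgebra.ι ℂ j) (FreeAlgebra.ι ℂ j * FreeAlgebra.ι ℂ i)

/-- The 0-Hecke algebra `H_{n+1}(0)` over `ℂ`. -/
abbrev Hecke (n : ℕ) := RingQuot (HRel n)

/-- The generator `π_{i+1}` of the 0-Hecke algebra. -/
def hpi {n : ℕ} (i : Fin n) : Hecke n :=
  RingQuot.mkAlgHom ℂ (HRel n) (FreeAlgebra.ι ℂ i)

/-- The element `π̄_{i+1} = π_{i+1} - 1`. -/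
def hpibar {n : ℕ} (i : Fin n) : Hecke n := hpi i - 1

/-- `l` is a reduced word for `σ`. -/
def IsReducedWord {n : ℕ} (l : List (Fin n)) (σ : SG n) : Prop :=
  (l.map sgen).prod = σ ∧ l.length = len σ

/-- `π_σ`, the product of the generators `π_i` along a reduced word for `σ`. -/
noncomputable def piPerm {n : ℕ} (σ : SG n) : Hecke n :=
  if h : ∃ l : List (Fin n), IsReducedWord l σ then ((h.choose.map hpi).prod) else 0

/-- `π̄_σ`, the product of the elements `π̄_i` along a reduced word for `σ`. -/
noncomputable def pibarPerm {n : ℕ} (σ : SG n) : Hecke n :=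
  if h : ∃ l : List (Fin n), IsReducedWord l σ then ((h.choose.map hpibar).prod) else 0

/-- The left weak Bruhat interval `[σ,ρ]_L`. -/
abbrev Itv {n : ℕ} (σ ρ : SG n) := {γ : SG n // leL σ γ ∧ leL γ ρ}

/-- The action of the generator `π_{i+1}` on a basis element of `ℂ[σ,ρ]_L`. -/
noncomputable def bpiFun {n : ℕ} (σ ρ : SG n) (i : Fin n) (γ : Itv σ ρ) :
    Itv σ ρ →₀ ℂ :=
  if i ∈ DesL γ.1 then Finsupp.single γ 1
  else if h : leL σ (sgen i * γ.1) ∧ leL (sgen i * γ.1) ρ then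
    Finsupp.single ⟨sgen i * γ.1, h⟩ 1
  else 0

/-- The operator `𝛑_i` on `ℂ[σ,ρ]_L` (the action of `π_{i+1}` on `B(σ,ρ)`). -/
noncomputable def bpi {n : ℕ} (σ ρ : SG n) (i : Fin n) :
    (Itv σ ρ →₀ ℂ) →ₗ[ℂ] (Itv σ ρ →₀ ℂ) :=
  Finsupp.lift _ ℂ _ (bpiFun σ ρ i)

/-- The action of `π̄_{i+1}` on a basis element of the module `B̄(σ,ρ)`. -/
noncomputable def bbarFun {n : ℕ} (σ ρ : SG n) (i : Fin n) (γ : Itv σ ρ) :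
    Itv σ ρ →₀ ℂ :=
  if i ∈ DesL γ.1 then -Finsupp.single γ 1
  else if h : leL σ (sgen i * γ.1) ∧ leL (sgen i * γ.1) ρ then
    Finsupp.single ⟨sgen i * γ.1, h⟩ 1
  else 0

/-- The operator giving the action of `π̄_{i+1}` on `B̄(σ,ρ)`. -/
noncomputable def bbar {n : ℕ} (σ ρ : SG n) (i : Fin n) :
    (Itv σ ρ →₀ ℂ) →ₗ[ℂ] (Itv σ ρ →₀ ℂ) :=
  Finsupp.lift _ ℂ _ (bbarFun σ ρ i)

/-- `perm_J`: the permutation sending the `k`-th smallest element of `J` to `k` and the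
`s`-th smallest element of the complement of `J` to `m + s` (0-indexed). -/
noncomputable def permJdown {N : ℕ} (m : ℕ) (hm : m ≤ N + 1) (J : Finset (Fin (N + 1)))
    (hJ : J.card = m) : SG N :=
  (Equiv.sumCompl (· ∈ J)).symm.trans
    ((Equiv.sumCongr (J.orderIsoOfFin hJ).toEquiv.symm
        ((Equiv.subtypeEquivRight (fun x => (Finset.mem_compl (a := x)).symm)).trans
          (Jᶜ.orderIsoOfFin (by
              rw [Finset.card_compl, hJ, Fintype.card_fin])).toEquiv.symm)).trans
      (finSumFinEquiv.trans (finCongr (by omega))))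

/-- `perm^J`: the permutation sending the `k`-th smallest element of `J` to `m - k + 1` and
the `s`-th smallest element of the complement of `J` to `m + n - s + 1` (here 0-indexed:
each block is reversed). -/
noncomputable def permJup {N : ℕ} (m : ℕ) (hm : m ≤ N + 1) (J : Finset (Fin (N + 1)))
    (hJ : J.card = m) : SG N :=
  (Equiv.sumCompl (· ∈ J)).symm.trans
    ((Equiv.sumCongr ((J.orderIsoOfFin hJ).toEquiv.symm.trans
          (Fin.revPerm : Equiv.Perm (Fin m)))
        (((Equiv.subtypeEquivRight (fun x => (Finset.mem_compl (a := x)).symm)).trans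
          (Jᶜ.orderIsoOfFin (by
              rw [Finset.card_compl, hJ, Fintype.card_fin])).toEquiv.symm).trans
          (Fin.revPerm : Equiv.Perm (Fin (N + 1 - m))))).trans
      (finSumFinEquiv.trans (finCongr (by omega))))

namespace Stmt15Aux
variable {n : ℕ}

def Pset (σ : SG n) : Finset (Fin (n+1) × Fin (n+1)) :=
  Finset.univ.filter fun p => p.1 < p.2 ∧ σ p.2 < σ p.1

lemma mem_Pset {σ : SG n} {p : Fin (n+1) × Fin (n+1)} :
    p ∈ Pset σ ↔ p.1 < p.2 ∧ σ p.2 < σ p.1 := by simp [Pset]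

lemma len_eq_card (σ : SG n) : len σ = (Pset σ).card := rfl

def cset (γ σ : SG n) : Finset (Fin (n+1) × Fin (n+1)) :=
  Finset.univ.filter fun p => p.1 < p.2 ∧ σ p.2 < σ p.1 ∧ γ (σ p.1) < γ (σ p.2)

lemma len_mul_formula (γ σ : SG n) :
    len σ + len γ = len (γ * σ) + 2 * (cset γ σ).card := by
  classical
  set S1 : Finset (Fin (n+1) × Fin (n+1)) :=
    Finset.univ.filter fun p => p.1 < p.2 ∧ σ p.2 < σ p.1 ∧ γ (σ p.2) < γ (σ p.1) with hS1
  set S3 : Finset (Fin (n+1) × Fin (n+1)) :=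
    Finset.univ.filter fun p => p.1 < p.2 ∧ σ p.1 < σ p.2 ∧ γ (σ p.2) < γ (σ p.1) with hS3
  have hne : ∀ p : Fin (n+1) × Fin (n+1), p.1 < p.2 → σ p.1 ≠ σ p.2 := by
    intro p hp h
    exact hp.ne (σ.injective h)
  have hps : Pset σ = S1 ∪ cset γ σ := by
    ext p
    simp only [hS1, cset, mem_Pset, Finset.mem_union, Finset.mem_filter, Finset.mem_univ,
      true_and]
    constructor
    · rintro ⟨h1, h2⟩
      rcases lt_or_gt_of_ne (fun h => h2.ne (γ.injective h) :
          γ (σ p.2) ≠ γ (σ p.1)) with h3 | h3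
      · exact Or.inl ⟨h1, h2, h3⟩
      · exact Or.inr ⟨h1, h2, h3⟩
    · rintro (⟨h1, h2, -⟩ | ⟨h1, h2, -⟩) <;> exact ⟨h1, h2⟩
  have hd12 : Disjoint S1 (cset γ σ) := by
    rw [Finset.disjoint_left]
    rintro p hp hq
    simp only [hS1, cset, Finset.mem_filter] at hp hq
    exact absurd (hp.2.2.2.trans hq.2.2.2) (lt_irrefl _)
  have hpm : Pset (γ * σ) = S1 ∪ S3 := by
    ext p
    simp only [hS1, hS3, mem_Pset, Finset.mem_union, Finset.mem_filter, Finset.mem_univ,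
      true_and, Equiv.Perm.mul_apply]
    constructor
    · rintro ⟨h1, h2⟩
      rcases lt_or_gt_of_ne (hne p h1) with h3 | h3
      · exact Or.inr ⟨h1, h3, h2⟩
      · exact Or.inl ⟨h1, h3, h2⟩
    · rintro (⟨h1, -, h2⟩ | ⟨h1, -, h2⟩) <;> exact ⟨h1, h2⟩
  have hd13 : Disjoint S1 S3 := by
    rw [Finset.disjoint_left]
    rintro p hp hq
    simp only [hS1, hS3, Finset.mem_filter] at hp hq
    exact absurd (hp.2.2.1.trans hq.2.2.1) (lt_irrefl _)
  have hd23 : Disjoint (cset γ σ) S3 := by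
    rw [Finset.disjoint_left]
    rintro p hp hq
    simp only [hS3, cset, Finset.mem_filter] at hp hq
    exact absurd (hp.2.2.1.trans hq.2.2.1) (lt_irrefl _)
  have hγ : (cset γ σ).card + S3.card = len γ := by
    rw [← Finset.card_union_of_disjoint hd23, len_eq_card]
    apply Finset.card_nbij'
      (i := fun p => if σ p.2 < σ p.1 then (σ p.2, σ p.1) else (σ p.1, σ p.2))
      (j := fun q => if σ⁻¹ q.2 < σ⁻¹ q.1 then (σ⁻¹ q.2, σ⁻¹ q.1) else (σ⁻¹ q.1, σ⁻¹ q.2))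
    · intro p hp
      simp only [hS3, cset, Finset.mem_coe, Finset.mem_union, Finset.mem_filter, Finset.mem_univ, true_and]
        at hp
      rcases hp with ⟨h1, h2, h3⟩ | ⟨h1, h2, h3⟩
      · dsimp only; rw [if_pos h2]; exact mem_Pset.mpr ⟨h2, h3⟩
      · dsimp only; rw [if_neg (asymm h2)]; exact mem_Pset.mpr ⟨h2, h3⟩
    · intro q hq
      rw [Finset.mem_coe, mem_Pset] at hq
      obtain ⟨h1, h2⟩ := hq
      simp only [hS3, cset, Finset.mem_coe, Finset.mem_union, Finset.mem_filter, Finset.mem_univ, true_and]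
      by_cases h : σ⁻¹ q.2 < σ⁻¹ q.1
      · rw [if_pos h]
        exact Or.inl ⟨h, by simp [h1], by simpa using h2⟩
      · rw [if_neg h]
        have hne' : σ⁻¹ q.1 ≠ σ⁻¹ q.2 := fun he => h1.ne (by simpa using congrArg σ he)
        have h' : σ⁻¹ q.1 < σ⁻¹ q.2 := lt_of_le_of_ne (not_lt.mp h) hne'
        exact Or.inr ⟨h', by simp [h1], by simpa using h2⟩
    · intro p hp
      simp only [hS3, cset, Finset.mem_coe, Finset.mem_union, Finset.mem_filter, Finset.mem_univ, true_and]
        at hp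
      rcases hp with ⟨h1, h2, h3⟩ | ⟨h1, h2, h3⟩
      · dsimp only; rw [if_pos h2]; simp [h1]
      · dsimp only; rw [if_neg (asymm h2)]; simp [asymm h1]
    · intro q hq
      rw [Finset.mem_coe, mem_Pset] at hq
      obtain ⟨h1, h2⟩ := hq
      by_cases h : σ⁻¹ q.2 < σ⁻¹ q.1
      · dsimp only; rw [if_pos h]; simp [h1]
      · dsimp only; rw [if_neg h]; simp [asymm h1]
  have c1 : len σ = S1.card + (cset γ σ).card := by
    rw [len_eq_card, hps, Finset.card_union_of_disjoint hd12]
  have c2 : len (γ * σ) = S1.card + S3.card := by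
    rw [len_eq_card, hpm, Finset.card_union_of_disjoint hd13]
  omega

lemma len_mul_le (γ σ : SG n) : len (γ * σ) ≤ len σ + len γ := by
  have := len_mul_formula γ σ; omega


lemma Pset_inj {σ ρ : SG n} (h : Pset σ = Pset ρ) : σ = ρ := by
  have key : ∀ p q : Fin (n+1), σ q < σ p ↔ ρ q < ρ p := by
    intro p q
    rcases lt_trichotomy q p with hlt | rfl | hlt
    · have e1 : σ q < σ p ↔ (q, p) ∉ Pset σ := by
        rw [mem_Pset]
        constructor
        · rintro h1 ⟨-, h2⟩; exact absurd (h1.trans h2) (lt_irrefl _)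
        · intro h1
          rcases lt_or_gt_of_ne (fun he => hlt.ne (σ.injective he) : σ q ≠ σ p) with h2 | h2
          · exact h2
          · exact absurd ⟨hlt, h2⟩ h1
      have e2 : ρ q < ρ p ↔ (q, p) ∉ Pset ρ := by
        rw [mem_Pset]
        constructor
        · rintro h1 ⟨-, h2⟩; exact absurd (h1.trans h2) (lt_irrefl _)
        · intro h1
          rcases lt_or_gt_of_ne (fun he => hlt.ne (ρ.injective he) : ρ q ≠ ρ p) with h2 | h2
          · exact h2
          · exact absurd ⟨hlt, h2⟩ h1
      rw [e1, e2, h]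
    · simp
    · have e1 : σ q < σ p ↔ (p, q) ∈ Pset σ := by
        rw [mem_Pset]; exact ⟨fun h1 => ⟨hlt, h1⟩, fun h1 => h1.2⟩
      have e2 : ρ q < ρ p ↔ (p, q) ∈ Pset ρ := by
        rw [mem_Pset]; exact ⟨fun h1 => ⟨hlt, h1⟩, fun h1 => h1.2⟩
      rw [e1, e2, h]
  have hv : ∀ p : Fin (n+1), (σ p : ℕ) = (ρ p : ℕ) := by
    intro p
    have c1 : ∀ τ : SG n, (τ p : ℕ) = (Finset.univ.filter fun q => τ q < τ p).card := by
      intro τ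
      have : (Finset.univ.filter fun q => τ q < τ p) =
          (Finset.Iio (τ p)).image (fun y => τ.symm y) := by
        ext x
        simp only [Finset.mem_filter, Finset.mem_univ, true_and, Finset.mem_image,
          Finset.mem_Iio]
        constructor
        · intro hx; exact ⟨τ x, hx, by simp⟩
        · rintro ⟨y, hy, rfl⟩; simpa using hy
      rw [this, Finset.card_image_of_injective _ τ.symm.injective, Fin.card_Iio]
    rw [c1 σ, c1 ρ]
    congr 1
    apply Finset.filter_congr
    intro q _
    simp [key p q]
  apply Equiv.ext
  intro x
  exact Fin.ext (hv x)

lemma exists_descent (τ : SG n) (h : τ ≠ 1) : ∃ i : Fin n, τ i.succ < τ i.castSucc := by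
  by_contra hc
  push_neg at hc
  have hsm : StrictMono τ := by
    rw [Fin.strictMono_iff_lt_succ]
    intro i
    exact (hc i).lt_of_ne fun he => (Fin.castSucc_lt_succ (i := i)).ne (τ.injective he)
  have : (⟨τ, hsm.le_iff_le⟩ : Fin (n+1) ≃o Fin (n+1)) = OrderIso.refl _ :=
    Subsingleton.elim _ _
  apply h
  apply Equiv.ext
  intro x
  simpa using congrArg (fun f : Fin (n+1) ≃o Fin (n+1) => f x) this

lemma swap_adjacent_lt {a b u v : Fin (n+1)} (hab : (a : ℕ) + 1 = b) (huv : u < v) :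
    Equiv.swap a b v < Equiv.swap a b u ↔ u = a ∧ v = b := by
  have hab' : a < b := by rw [Fin.lt_def]; omega
  by_cases hu1 : u = a
  · subst hu1
    by_cases hv1 : v = b
    · subst hv1; simp [Equiv.swap_apply_left, Equiv.swap_apply_right, hab']
    · rw [Equiv.swap_apply_left, Equiv.swap_apply_of_ne_of_ne huv.ne' hv1]
      have hbv : b < v := by
        rw [Fin.lt_def] at huv hab' ⊢
        have : (v : ℕ) ≠ (b : ℕ) := fun he => hv1 (Fin.ext he)
        omega
      simp [asymm hbv, hv1]
  · by_cases hu2 : u = b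
    · have hva : v ≠ a := ((hu2 ▸ hab').trans huv).ne'
      have hvb : v ≠ b := hu2 ▸ huv.ne'
      rw [hu2, Equiv.swap_apply_right, Equiv.swap_apply_of_ne_of_ne hva hvb]
      constructor
      · intro h'; exact absurd (h'.trans ((hu2 ▸ hab').trans huv)) (lt_irrefl _)
      · rintro ⟨h', -⟩; exact absurd (hu2.trans h') hu1
    · rw [Equiv.swap_apply_of_ne_of_ne hu1 hu2]
      by_cases hv1 : v = a
      · subst hv1
        rw [Equiv.swap_apply_left]
        have hub : u < b := huv.trans hab'
        constructor
        · intro h'; exact absurd (hub.trans h') (lt_irrefl _)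
        · rintro ⟨h', -⟩; exact absurd h' hu1
      · by_cases hv2 : v = b
        · subst hv2
          rw [Equiv.swap_apply_right]
          have hua : u < a := by
            rw [Fin.lt_def] at huv hab' ⊢
            have : (u : ℕ) ≠ (a : ℕ) := fun he => hu1 (Fin.ext he)
            omega
          constructor
          · intro h'; exact absurd (hua.trans h') (lt_irrefl _)
          · rintro ⟨h', -⟩; exact absurd h' hu1
        · rw [Equiv.swap_apply_of_ne_of_ne hv1 hv2]
          constructor
          · intro h'; exact absurd (huv.trans h') (lt_irrefl _)
          · rintro ⟨-, h'⟩; exact absurd h' hv2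

lemma Pset_sgen_mul (i : Fin n) (σ : SG n)
    (h : σ⁻¹ i.castSucc < σ⁻¹ i.succ) :
    Pset (sgen i * σ) = insert (σ⁻¹ i.castSucc, σ⁻¹ i.succ) (Pset σ) := by
  set a := i.castSucc
  set b := i.succ
  have hab : (a : ℕ) + 1 = b := by simp [a, b]
  set p := σ⁻¹ a
  set q := σ⁻¹ b
  ext x
  simp only [mem_Pset, Finset.mem_insert, Equiv.Perm.mul_apply, sgen]
  constructor
  · rintro ⟨h1, h2⟩
    have hne : σ x.1 ≠ σ x.2 := fun he => h1.ne (σ.injective he)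
    rcases lt_or_gt_of_ne hne with h3 | h3
    · have := (swap_adjacent_lt hab h3).mp h2
      left
      have hx1 : x.1 = p := σ.injective (by simp [p, this.1])
      have hx2 : x.2 = q := σ.injective (by simp [q, this.2])
      rw [← hx1, ← hx2]
    · right; exact ⟨h1, h3⟩
  · rintro (hx | ⟨h1, h2⟩)
    · have h1 : x.1 < x.2 := by rw [hx]; exact h
      refine ⟨h1, ?_⟩
      have hx1 : σ x.1 = a := by rw [hx]; simp [p]
      have hx2 : σ x.2 = b := by rw [hx]; simp [q]
      exact (swap_adjacent_lt hab (by rw [hx1, hx2, Fin.lt_def]; omega)).mpr ⟨hx1, hx2⟩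
    · refine ⟨h1, ?_⟩
      by_contra hcon
      have hne : Equiv.swap a b (σ x.1) ≠ Equiv.swap a b (σ x.2) :=
        fun he => h2.ne ((Equiv.injective _) he).symm
      have h3 : Equiv.swap a b (σ x.1) < Equiv.swap a b (σ x.2) :=
        lt_of_le_of_ne (not_lt.mp hcon) hne
      have := (swap_adjacent_lt hab h2).mp h3
      have hx2 : x.2 = p := σ.injective (by simp [p, this.1])
      have hx1 : x.1 = q := σ.injective (by simp [q, this.2])
      rw [hx1, hx2] at h1
      exact absurd (h.trans h1) (lt_irrefl _)

lemma nmem_Pset_sgen (i : Fin n) (σ : SG n) (h : σ⁻¹ i.castSucc < σ⁻¹ i.succ) :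
    (σ⁻¹ i.castSucc, σ⁻¹ i.succ) ∉ Pset σ := by
  rw [mem_Pset]
  rintro ⟨-, h2⟩
  simp only [Equiv.Perm.inv_def, Equiv.apply_symm_apply] at h2
  have : (i.castSucc : ℕ) < (i.succ : ℕ) := by simp
  rw [Fin.lt_def] at h2
  omega

lemma Pset_one : Pset (1 : SG n) = ∅ :=
  Finset.card_eq_zero.mp (len_eq_card (1 : SG n) ▸ len_one)

lemma len_sgen (i : Fin n) : len (sgen i) = 1 := by
  have h : (1 : SG n)⁻¹ i.castSucc < (1 : SG n)⁻¹ i.succ := by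
    simp [Fin.castSucc_lt_succ]
  have := Pset_sgen_mul i 1 h
  rw [mul_one] at this
  rw [len_eq_card, this]
  simp [Pset_one]

lemma leL_iff_subset (σ ρ : SG n) : leL σ ρ ↔ Pset σ ⊆ Pset ρ := by
  constructor
  · rintro ⟨γ, rfl, hlen⟩
    have hf := len_mul_formula γ σ
    have hc : (cset γ σ).card = 0 := by omega
    rw [Finset.card_eq_zero] at hc
    intro x hx
    rw [mem_Pset] at hx ⊢
    obtain ⟨h1, h2⟩ := hx
    refine ⟨h1, ?_⟩
    simp only [Equiv.Perm.mul_apply]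
    have hne : γ (σ x.2) ≠ γ (σ x.1) := fun he => h2.ne (γ.injective he)
    rcases lt_or_gt_of_ne hne with h3 | h3
    · exact h3
    · exfalso
      have : x ∈ cset γ σ := by
        simp only [cset, Finset.mem_filter, Finset.mem_univ, true_and]
        exact ⟨h1, h2, h3⟩
      rw [hc] at this
      exact absurd this (Finset.notMem_empty x)
  · intro hsub
    have main : ∀ k : ℕ, ∀ σ : SG n, (Pset ρ \ Pset σ).card ≤ k → Pset σ ⊆ Pset ρ → leL σ ρ := by
      intro k
      induction k with
      | zero =>
        intro σ hcard hsub
        have hdiff : Pset ρ \ Pset σ = ∅ := Finset.card_eq_zero.mp (Nat.le_zero.mp hcard)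
        have : Pset σ = Pset ρ :=
          Finset.Subset.antisymm hsub (Finset.sdiff_eq_empty_iff_subset.mp hdiff)
        rw [Pset_inj this]
        exact leL_refl ρ
      | succ k IH =>
        intro σ hcard hsub
        by_cases hσρ : σ = ρ
        · rw [hσρ]; exact leL_refl ρ
        · have hτ : ρ * σ⁻¹ ≠ 1 := by
            intro he
            apply hσρ
            have := congrArg (· * σ) he
            simpa [mul_assoc] using this.symm
          obtain ⟨i, hi⟩ := exists_descent (ρ * σ⁻¹) hτ
          set a := i.castSucc with ha
          set b := i.succ with hb
          set p := σ⁻¹ a with hp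
          set q := σ⁻¹ b with hq
          have hab : a < b := Fin.castSucc_lt_succ (i := i)
          have hρpq : ρ q < ρ p := by
            have e1 : ρ p = (ρ * σ⁻¹) a := by simp [hp]
            have e2 : ρ q = (ρ * σ⁻¹) b := by simp [hq]
            rw [e1, e2]; exact hi
          have hpq : p < q := by
            rcases lt_trichotomy p q with h' | h' | h'
            · exact h'
            · exfalso; apply hab.ne; apply σ.symm.injective; exact h'
            · exfalso
              have : (q, p) ∈ Pset σ := by
                rw [mem_Pset]
                refine ⟨h', ?_⟩
                simp only [hp, hq, Equiv.Perm.inv_def, Equiv.apply_symm_apply]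
                exact hab
              have := hsub this
              rw [mem_Pset] at this
              exact absurd (this.2.trans hρpq) (lt_irrefl _)
          have hnew : (p, q) ∈ Pset ρ := mem_Pset.mpr ⟨hpq, hρpq⟩
          have hold : (p, q) ∉ Pset σ := nmem_Pset_sgen i σ hpq
          have hPσ' : Pset (sgen i * σ) = insert (p, q) (Pset σ) := Pset_sgen_mul i σ hpq
          have hsub' : Pset (sgen i * σ) ⊆ Pset ρ := by
            rw [hPσ']
            exact Finset.insert_subset hnew hsub
          have hcard' : (Pset ρ \ Pset (sgen i * σ)).card ≤ k := by
            rw [hPσ']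
            have he : Pset ρ \ insert (p, q) (Pset σ) = (Pset ρ \ Pset σ).erase (p, q) := by
              ext x
              simp only [Finset.mem_sdiff, Finset.mem_insert, Finset.mem_erase]
              tauto
            rw [he]
            have hmem : (p, q) ∈ Pset ρ \ Pset σ := Finset.mem_sdiff.mpr ⟨hnew, hold⟩
            have := Finset.card_erase_of_mem hmem
            omega
          obtain ⟨δ, hδ, hlen2⟩ := IH (sgen i * σ) hcard' hsub'
          refine ⟨δ * sgen i, by rw [mul_assoc]; exact hδ, ?_⟩
          have l1 : len (sgen i * σ) = len σ + 1 := by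
            rw [len_eq_card, hPσ', Finset.card_insert_of_notMem hold, len_eq_card]
          have l2 : len (δ * sgen i) ≤ len (sgen i) + len δ := len_mul_le δ (sgen i)
          have l3 : len ((δ * sgen i) * σ) ≤ len σ + len (δ * sgen i) := len_mul_le _ _
          have l4 : (δ * sgen i) * σ = ρ := by rw [mul_assoc]; exact hδ.symm
          rw [l4] at l3
          rw [len_sgen] at l2
          omega
    exact main (Pset ρ \ Pset σ).card σ le_rfl hsub


lemma cardc (J : Finset (Fin (N + 1))) (hJ : J.card = m) : Jᶜ.card = N + 1 - m := by
  rw [Finset.card_compl, hJ, Fintype.card_fin]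

lemma down_val_mem (hm : m ≤ N + 1) (J : Finset (Fin (N + 1))) (hJ : J.card = m)
    {x : Fin (N + 1)} (hx : x ∈ J) :
    (permJdown m hm J hJ x : ℕ) = ((J.orderIsoOfFin hJ).symm ⟨x, hx⟩ : ℕ) := by
  simp [permJdown, Equiv.sumCompl_symm_apply_of_pos hx]

lemma down_val_nmem (hm : m ≤ N + 1) (J : Finset (Fin (N + 1))) (hJ : J.card = m)
    {x : Fin (N + 1)} (hx : x ∉ J) :
    (permJdown m hm J hJ x : ℕ) =
      m + ((Jᶜ.orderIsoOfFin (cardc J hJ)).symm ⟨x, by simpa using hx⟩ : ℕ) := by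
  simp [permJdown, Equiv.sumCompl_symm_apply_of_neg hx, Equiv.subtypeEquivRight]
  rfl

lemma up_val_mem (hm : m ≤ N + 1) (J : Finset (Fin (N + 1))) (hJ : J.card = m)
    {x : Fin (N + 1)} (hx : x ∈ J) :
    (permJup m hm J hJ x : ℕ) = (((J.orderIsoOfFin hJ).symm ⟨x, hx⟩).rev : ℕ) := by
  simp [permJup, Equiv.sumCompl_symm_apply_of_pos hx]

lemma up_val_nmem (hm : m ≤ N + 1) (J : Finset (Fin (N + 1))) (hJ : J.card = m)
    {x : Fin (N + 1)} (hx : x ∉ J) :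
    (permJup m hm J hJ x : ℕ) =
      m + (((Jᶜ.orderIsoOfFin (cardc J hJ)).symm ⟨x, by simpa using hx⟩).rev : ℕ) := by
  simp [permJup, Equiv.sumCompl_symm_apply_of_neg hx, Equiv.subtypeEquivRight]
  rfl

lemma down_lt (hm : m ≤ N + 1) (J : Finset (Fin (N + 1))) (hJ : J.card = m)
    {x : Fin (N + 1)} (hx : x ∈ J) : (permJdown m hm J hJ x : ℕ) < m := by
  rw [down_val_mem hm J hJ hx]; exact ((J.orderIsoOfFin hJ).symm ⟨x, hx⟩).isLt

lemma down_ge (hm : m ≤ N + 1) (J : Finset (Fin (N + 1))) (hJ : J.card = m)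
    {x : Fin (N + 1)} (hx : x ∉ J) : m ≤ (permJdown m hm J hJ x : ℕ) := by
  rw [down_val_nmem hm J hJ hx]; omega

lemma up_lt (hm : m ≤ N + 1) (J : Finset (Fin (N + 1))) (hJ : J.card = m)
    {x : Fin (N + 1)} (hx : x ∈ J) : (permJup m hm J hJ x : ℕ) < m := by
  rw [up_val_mem hm J hJ hx]; exact (((J.orderIsoOfFin hJ).symm ⟨x, hx⟩).rev).isLt

lemma up_ge (hm : m ≤ N + 1) (J : Finset (Fin (N + 1))) (hJ : J.card = m)
    {x : Fin (N + 1)} (hx : x ∉ J) : m ≤ (permJup m hm J hJ x : ℕ) := by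
  rw [up_val_nmem hm J hJ hx]; omega

lemma down_mono_mem (hm : m ≤ N + 1) (J : Finset (Fin (N + 1))) (hJ : J.card = m)
    {x y : Fin (N + 1)} (hx : x ∈ J) (hy : y ∈ J) (hxy : x < y) :
    permJdown m hm J hJ x < permJdown m hm J hJ y := by
  rw [Fin.lt_def, down_val_mem hm J hJ hx, down_val_mem hm J hJ hy, ← Fin.lt_def]
  exact (J.orderIsoOfFin hJ).symm.lt_iff_lt.mpr (Subtype.mk_lt_mk.mpr hxy)

lemma down_mono_nmem (hm : m ≤ N + 1) (J : Finset (Fin (N + 1))) (hJ : J.card = m)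
    {x y : Fin (N + 1)} (hx : x ∉ J) (hy : y ∉ J) (hxy : x < y) :
    permJdown m hm J hJ x < permJdown m hm J hJ y := by
  rw [Fin.lt_def, down_val_nmem hm J hJ hx, down_val_nmem hm J hJ hy]
  have : (Jᶜ.orderIsoOfFin (cardc J hJ)).symm ⟨x, by simpa using hx⟩ <
      (Jᶜ.orderIsoOfFin (cardc J hJ)).symm ⟨y, by simpa using hy⟩ :=
    (Jᶜ.orderIsoOfFin (cardc J hJ)).symm.lt_iff_lt.mpr (Subtype.mk_lt_mk.mpr hxy)
  rw [Fin.lt_def] at this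
  omega

lemma up_anti_mem (hm : m ≤ N + 1) (J : Finset (Fin (N + 1))) (hJ : J.card = m)
    {x y : Fin (N + 1)} (hx : x ∈ J) (hy : y ∈ J) (hxy : x < y) :
    permJup m hm J hJ y < permJup m hm J hJ x := by
  rw [Fin.lt_def, up_val_mem hm J hJ hx, up_val_mem hm J hJ hy, ← Fin.lt_def]
  rw [Fin.rev_lt_rev]
  exact (J.orderIsoOfFin hJ).symm.lt_iff_lt.mpr (Subtype.mk_lt_mk.mpr hxy)

lemma up_anti_nmem (hm : m ≤ N + 1) (J : Finset (Fin (N + 1))) (hJ : J.card = m)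
    {x y : Fin (N + 1)} (hx : x ∉ J) (hy : y ∉ J) (hxy : x < y) :
    permJup m hm J hJ y < permJup m hm J hJ x := by
  rw [Fin.lt_def, up_val_nmem hm J hJ hx, up_val_nmem hm J hJ hy]
  have : ((Jᶜ.orderIsoOfFin (cardc J hJ)).symm ⟨y, by simpa using hy⟩).rev <
      ((Jᶜ.orderIsoOfFin (cardc J hJ)).symm ⟨x, by simpa using hx⟩).rev := by
    rw [Fin.rev_lt_rev]
    exact (Jᶜ.orderIsoOfFin (cardc J hJ)).symm.lt_iff_lt.mpr (Subtype.mk_lt_mk.mpr hxy)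
  rw [Fin.lt_def] at this
  omega

lemma Pset_down (hm : m ≤ N + 1) (J : Finset (Fin (N + 1))) (hJ : J.card = m)
    {p : Fin (N + 1) × Fin (N + 1)} :
    p ∈ Pset (permJdown m hm J hJ) ↔ p.1 < p.2 ∧ p.1 ∉ J ∧ p.2 ∈ J := by
  rw [mem_Pset]
  constructor
  · rintro ⟨h1, h2⟩
    refine ⟨h1, ?_⟩
    by_cases hp : p.1 ∈ J <;> by_cases hq : p.2 ∈ J
    · exact absurd (h2.trans (down_mono_mem hm J hJ hp hq h1)) (lt_irrefl _)
    · exfalso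
      rw [Fin.lt_def] at h2
      have := down_lt hm J hJ hp
      have := down_ge hm J hJ hq
      omega
    · exact ⟨hp, hq⟩
    · exact absurd (h2.trans (down_mono_nmem hm J hJ hp hq h1)) (lt_irrefl _)
  · rintro ⟨h1, h2, h3⟩
    refine ⟨h1, ?_⟩
    rw [Fin.lt_def]
    have := down_lt hm J hJ h3
    have := down_ge hm J hJ h2
    omega

lemma Pset_up (hm : m ≤ N + 1) (J : Finset (Fin (N + 1))) (hJ : J.card = m)
    {p : Fin (N + 1) × Fin (N + 1)} :
    p ∈ Pset (permJup m hm J hJ) ↔ p.1 < p.2 ∧ ¬(p.1 ∈ J ∧ p.2 ∉ J) := by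
  rw [mem_Pset]
  constructor
  · rintro ⟨h1, h2⟩
    refine ⟨h1, ?_⟩
    rintro ⟨hp, hq⟩
    rw [Fin.lt_def] at h2
    have := up_lt hm J hJ hp
    have := up_ge hm J hJ hq
    omega
  · rintro ⟨h1, h2⟩
    refine ⟨h1, ?_⟩
    by_cases hp : p.1 ∈ J <;> by_cases hq : p.2 ∈ J
    · exact up_anti_mem hm J hJ hp hq h1
    · exact absurd ⟨hp, hq⟩ h2
    · rw [Fin.lt_def]
      have := up_lt hm J hJ hq
      have := up_ge hm J hJ hp
      omega
    · exact up_anti_nmem hm J hJ hp hq h1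

lemma sep_lt_m (J : Finset (Fin (N + 1))) (hJ : J.card = m) (γ : SG N)
    (hsep : ∀ x ∈ J, ∀ y ∉ J, γ x < γ y) {x : Fin (N + 1)}
    (hx : x ∈ J) : (γ x : ℕ) < m := by
  have himg : Jᶜ.image γ ⊆ Finset.Ioi (γ x) := by
    intro z hz
    rw [Finset.mem_image] at hz
    obtain ⟨y, hy, rfl⟩ := hz
    rw [Finset.mem_compl] at hy
    exact Finset.mem_Ioi.mpr (hsep x hx y hy)
  have hcard := Finset.card_le_card himg
  rw [Finset.card_image_of_injective _ γ.injective, cardc J hJ, Fin.card_Ioi] at hcard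
  have hm1 : 1 ≤ m := by
    rw [← hJ]
    exact Finset.card_pos.mpr ⟨x, hx⟩
  have := (γ x).isLt
  omega

lemma sep_ge_m (J : Finset (Fin (N + 1))) (hJ : J.card = m) (γ : SG N)
    (hsep : ∀ x ∈ J, ∀ y ∉ J, γ x < γ y) {y : Fin (N + 1)}
    (hy : y ∉ J) : m ≤ (γ y : ℕ) := by
  have himg : J.image γ ⊆ Finset.Iio (γ y) := by
    intro z hz
    rw [Finset.mem_image] at hz
    obtain ⟨x, hx, rfl⟩ := hz
    exact Finset.mem_Iio.mpr (hsep x hx y hy)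
  have hcard := Finset.card_le_card himg
  rw [Finset.card_image_of_injective _ γ.injective, hJ, Fin.card_Iio] at hcard
  exact hcard

end Stmt15Aux

open Stmt15Aux in
/-- For an `m`-element subset `J` of the `(N+1)`-element set of positions, the set of
permutations `γ` with `γ⁻¹([1,m]) = J` (i.e. `γ(x)` is among the `m` smallest values exactly
for `x ∈ J`) is the left weak Bruhat interval `[perm_J, perm^J]_L`. -/
theorem stmt15 (N m : ℕ) (hm : m ≤ N + 1) (J : Finset (Fin (N + 1))) (hJ : J.card = m)
    (γ : SG N) :
    (∀ x : Fin (N + 1), ((γ x : ℕ) < m ↔ x ∈ J)) ↔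
      (leL (permJdown m hm J hJ) γ ∧ leL γ (permJup m hm J hJ)) := by
  rw [Stmt15Aux.leL_iff_subset, Stmt15Aux.leL_iff_subset]
  constructor
  · intro h
    constructor
    · intro p hp
      rw [Pset_down hm J hJ] at hp
      obtain ⟨h1, h2, h3⟩ := hp
      rw [mem_Pset]
      refine ⟨h1, ?_⟩
      rw [Fin.lt_def]
      have ha : (γ p.2 : ℕ) < m := (h p.2).mpr h3
      have hb : ¬ (γ p.1 : ℕ) < m := fun hc => h2 ((h p.1).mp hc)
      omega
    · intro p hp
      rw [mem_Pset] at hp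
      obtain ⟨h1, h2⟩ := hp
      rw [Pset_up hm J hJ]
      refine ⟨h1, ?_⟩
      rintro ⟨hp1, hp2⟩
      have ha : (γ p.1 : ℕ) < m := (h p.1).mpr hp1
      have hb : ¬ (γ p.2 : ℕ) < m := fun hc => hp2 ((h p.2).mp hc)
      rw [Fin.lt_def] at h2
      omega
  · rintro ⟨hdown, hup⟩
    have hsep : ∀ x ∈ J, ∀ y ∉ J, γ x < γ y := by
      intro x hx y hy
      rcases lt_trichotomy x y with hxy | rfl | hxy
      · have hnm : (x, y) ∉ Pset γ := by
          intro hc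
          have := hup hc
          rw [Pset_up hm J hJ] at this
          exact this.2 ⟨hx, hy⟩
        rw [mem_Pset] at hnm
        push_neg at hnm
        have h2 := hnm hxy
        exact lt_of_le_of_ne h2 fun he => hxy.ne (γ.injective he)
      · exact absurd hx hy
      · have hmem : (y, x) ∈ Pset (permJdown m hm J hJ) := by
          rw [Pset_down hm J hJ]
          exact ⟨hxy, hy, hx⟩
        have := hdown hmem
        rw [mem_Pset] at this
        exact this.2
    intro x
    constructor
    · intro hlt
      by_contra hx
      exact absurd hlt (not_lt.mpr (sep_ge_m J hJ γ hsep hx))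
    · intro hx
      exact sep_lt_m J hJ γ hsep hx

end
end

section
/- For σ, ρ ∈ S_n, the map γ ↦ w_0 γ w_0 induces an isomorphism of H_n(0)-modules from the φ-twist of B(σ,ρ) onto B(w_0σw_0, w_0ρw_0), where φ is the involutive automorphism of H_n(0) with φ(π_i) = π_{n−i}. -/
open scoped Classical

noncomputable section

/-- The underlying map of the `φ`-twist isomorphism, sending a basis element `γ` of
`B(σ,ρ)` to `w₀ γ w₀` (a basis element of `B(σ^{w₀}, ρ^{w₀})`). -/
noncomputable def phiF {n : ℕ} (σ ρ : SG n) :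
    (Itv σ ρ →₀ ℂ) →ₗ[ℂ] (Itv (w0 * σ * w0) (w0 * ρ * w0) →₀ ℂ) :=
  Finsupp.lift _ ℂ _ (fun γ : Itv σ ρ =>
    if h : leL (w0 * σ * w0) (w0 * γ.1 * w0) ∧ leL (w0 * γ.1 * w0) (w0 * ρ * w0) then
      Finsupp.single ⟨w0 * γ.1 * w0, h⟩ 1
    else 0)



lemma w0_apply {n : ℕ} (x : Fin (n + 1)) : (w0 : SG n) x = x.rev := rfl

lemma w0_mul_w0 {n : ℕ} : (w0 : SG n) * w0 = 1 := by
  ext x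
  simp [Equiv.Perm.mul_apply, w0_apply, Fin.rev_rev]

lemma w0conj_mul {n : ℕ} (a b : SG n) :
    ((w0 : SG n) * a * w0) * (w0 * b * w0) = w0 * (a * b) * w0 := by
  calc ((w0 : SG n) * a * w0) * (w0 * b * w0) = w0 * a * (w0 * w0) * b * w0 := by
        simp [mul_assoc]
    _ = w0 * (a * b) * w0 := by rw [w0_mul_w0]; simp [mul_assoc]

lemma w0conj_conj {n : ℕ} (a : SG n) : (w0 : SG n) * (w0 * a * w0) * w0 = a := by
  calc (w0 : SG n) * (w0 * a * w0) * w0 = (w0 * w0) * a * (w0 * w0) := by simp [mul_assoc]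
    _ = a := by rw [w0_mul_w0]; simp

lemma len_conj {n : ℕ} (σ : SG n) : len ((w0 : SG n) * σ * w0) = len σ := by
  unfold len
  refine Finset.card_bij' (fun p _ => (p.2.rev, p.1.rev)) (fun q _ => (q.2.rev, q.1.rev))
    ?_ ?_ ?_ ?_
  · intro p hp
    simp only [Finset.mem_filter, Finset.mem_univ, true_and, Equiv.Perm.mul_apply,
      w0_apply] at hp ⊢
    exact ⟨Fin.rev_lt_rev.mpr (Finset.mem_filter.mp hp).2.1, Fin.rev_lt_rev.mp (Finset.mem_filter.mp hp).2.2⟩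
  · intro q hq
    simp only [Finset.mem_filter, Finset.mem_univ, true_and, Equiv.Perm.mul_apply,
      w0_apply, Fin.rev_rev] at hq ⊢
    exact Finset.mem_filter.mpr ⟨Finset.mem_univ _, Fin.rev_lt_rev.mpr hq.1, Fin.rev_lt_rev.mpr (by simpa [Fin.rev_rev] using hq.2)⟩
  · intro p _; simp
  · intro q _; simp

lemma leL_conj {n : ℕ} {σ γ : SG n} (h : leL σ γ) :
    leL ((w0 : SG n) * σ * w0) (w0 * γ * w0) := by
  obtain ⟨δ, hδ, hl⟩ := h
  refine ⟨w0 * δ * w0, ?_, ?_⟩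
  · rw [w0conj_mul, ← hδ]
  · rw [len_conj, len_conj, len_conj, hl]

lemma leL_conj_iff {n : ℕ} {σ γ : SG n} :
    leL ((w0 : SG n) * σ * w0) (w0 * γ * w0) ↔ leL σ γ := by
  refine ⟨fun h => ?_, leL_conj⟩
  have := leL_conj h
  rwa [w0conj_conj, w0conj_conj] at this

lemma conj_sgen {n : ℕ} (i : Fin n) : (w0 : SG n) * sgen i * w0 = sgen i.rev := by
  have hinv : (w0 : SG n)⁻¹ = w0 := inv_eq_of_mul_eq_one_left w0_mul_w0
  have h := Equiv.swap_apply_apply (w0 : SG n) i.castSucc i.succ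
  rw [hinv] at h
  unfold sgen
  rw [← h, show (w0 : SG n) i.castSucc = i.rev.succ from by
      rw [w0_apply, Fin.rev_castSucc],
    show (w0 : SG n) i.succ = i.rev.castSucc from by rw [w0_apply, Fin.rev_succ]]
  exact Equiv.swap_comm _ _

lemma sgen_mul_conj {n : ℕ} (i : Fin n) (γ : SG n) :
    sgen i * ((w0 : SG n) * γ * w0) = w0 * (sgen i.rev * γ) * w0 := by
  have h : sgen i = (w0 : SG n) * sgen i.rev * w0 := by rw [conj_sgen, Fin.rev_rev]
  rw [h, w0conj_mul]

lemma DesL_conj {n : ℕ} (i : Fin n) (γ : SG n) :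
    i ∈ DesL ((w0 : SG n) * γ * w0) ↔ i.rev ∈ DesL γ := by
  unfold DesL
  simp only [Set.mem_setOf_eq]
  rw [sgen_mul_conj, len_conj, len_conj]

/-- Conjugation by `w₀` as an equivalence of weak Bruhat intervals. -/
def itvEquiv {n : ℕ} (σ ρ : SG n) : Itv σ ρ ≃ Itv (w0 * σ * w0) (w0 * ρ * w0) where
  toFun γ := ⟨w0 * γ.1 * w0, leL_conj γ.2.1, leL_conj γ.2.2⟩
  invFun δ := ⟨w0 * δ.1 * w0,
    by have := leL_conj δ.2.1; rwa [w0conj_conj] at this,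
    by have := leL_conj δ.2.2; rwa [w0conj_conj] at this⟩
  left_inv γ := Subtype.ext (w0conj_conj _)
  right_inv δ := Subtype.ext (w0conj_conj _)

lemma phiF_single {n : ℕ} (σ ρ : SG n) (γ : Itv σ ρ) (c : ℂ) :
    phiF σ ρ (Finsupp.single γ c) = Finsupp.single (itvEquiv σ ρ γ) c := by
  unfold phiF
  rw [Finsupp.lift_apply, Finsupp.sum_single_index (by simp)]
  rw [dif_pos ⟨leL_conj γ.2.1, leL_conj γ.2.2⟩]
  simp [Finsupp.smul_single, itvEquiv]

lemma phiF_eq {n : ℕ} (σ ρ : SG n) :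
    phiF σ ρ = (Finsupp.domLCongr (R := ℂ) (itvEquiv σ ρ)).toLinearMap := by
  apply Finsupp.lhom_ext
  intro γ c
  rw [phiF_single]
  simp

lemma bpi_single {n : ℕ} (σ ρ : SG n) (j : Fin n) (γ : Itv σ ρ) (c : ℂ) :
    bpi σ ρ j (Finsupp.single γ c) = c • bpiFun σ ρ j γ := by
  unfold bpi
  rw [Finsupp.lift_apply, Finsupp.sum_single_index (by simp)]

lemma key {n : ℕ} (σ ρ : SG n) (i : Fin n) (γ : Itv σ ρ) :
    phiF σ ρ (bpiFun σ ρ i.rev γ) =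
      bpiFun (w0 * σ * w0) (w0 * ρ * w0) i (itvEquiv σ ρ γ) := by
  unfold bpiFun
  by_cases hA : i.rev ∈ DesL γ.1
  · have hA' : i ∈ DesL ((itvEquiv σ ρ γ).1 : SG n) := (DesL_conj i γ.1).mpr hA
    rw [if_pos hA, if_pos hA', phiF_single]
  · have hA' : i ∉ DesL ((itvEquiv σ ρ γ).1 : SG n) := fun h => hA ((DesL_conj i γ.1).mp h)
    rw [if_neg hA, if_neg hA']
    by_cases hB : leL σ (sgen i.rev * γ.1) ∧ leL (sgen i.rev * γ.1) ρ
    · have hB' : leL (w0 * σ * w0) (sgen i * (itvEquiv σ ρ γ).1) ∧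
          leL (sgen i * (itvEquiv σ ρ γ).1) (w0 * ρ * w0) := by
        constructor
        · show leL (w0 * σ * w0) (sgen i * (w0 * γ.1 * w0))
          rw [sgen_mul_conj]
          exact leL_conj hB.1
        · show leL (sgen i * (w0 * γ.1 * w0)) (w0 * ρ * w0)
          rw [sgen_mul_conj]
          exact leL_conj hB.2
      rw [dif_pos hB, dif_pos hB', phiF_single]
      congr 1
      refine Subtype.ext ?_
      show (itvEquiv σ ρ ⟨sgen i.rev * γ.1, hB⟩).1 = sgen i * (itvEquiv σ ρ γ).1
      show w0 * (sgen i.rev * γ.1) * w0 = sgen i * (w0 * γ.1 * w0)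
      rw [sgen_mul_conj]
    · have hB' : ¬(leL (w0 * σ * w0) (sgen i * (itvEquiv σ ρ γ).1) ∧
          leL (sgen i * (itvEquiv σ ρ γ).1) (w0 * ρ * w0)) := by
        intro h
        apply hB
        have h1 := h.1
        have h2 := h.2
        rw [show (itvEquiv σ ρ γ).1 = w0 * γ.1 * w0 from rfl, sgen_mul_conj] at h1 h2
        exact ⟨leL_conj_iff.mp h1, leL_conj_iff.mp h2⟩
      rw [dif_neg hB, dif_neg hB', map_zero]



/-- `γ ↦ w₀γw₀` is an isomorphism of `H_n(0)`-modules `φ[B(σ,ρ)] ≅ B(w₀σw₀, w₀ρw₀)`: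
it is bijective and intertwines the `φ`-twisted action (where `π_i` acts via
`φ(π_i) = π_{n-i}`, i.e. via the operator `𝛑_{rev i}`) with the action on
`B(w₀σw₀, w₀ρw₀)`. -/
theorem stmt16 (n : ℕ) (σ ρ : SG n) :
    Function.Bijective (phiF σ ρ) ∧
    ∀ (i : Fin n) (v : Itv σ ρ →₀ ℂ),
      phiF σ ρ (bpi σ ρ i.rev v) = bpi (w0 * σ * w0) (w0 * ρ * w0) i (phiF σ ρ v) := by
  constructor
  · rw [phiF_eq]
    exact (Finsupp.domLCongr (R := ℂ) (itvEquiv σ ρ)).bijective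
  · intro i v
    induction v using Finsupp.induction_linear with
    | zero => simp
    | add f g hf hg => simp [map_add, hf, hg]
    | single γ c =>
      rw [bpi_single, map_smul, key, phiF_single, bpi_single]

end
end
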